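/- Let γ ∈ {1, 2, 3, …}, p > 0, η > 1 and β ∈ ℝ with β ≠ pk for all k ∈ {0, 1, …, γ-1}. Then for every y ∈ (1, η], ∫_1^y m♯_{β,γ,p,η}(θ) dθ = (1/C*_{β,γ,p,η}) Σ_{k=0}^{γ-1} binom(γ-1, k) (-1)^k [ (pk - β) ln y - 1 + y^{β-pk} ] / (pk - β)^2. In particular, taking y = η gives C*_{β,γ,p,η} = Σ_{k=0}^{γ-1} binom(γ-1, k) (-1)^k [ (pk - β) ln η - 1 + η^{β-pk} ] / (pk - β)^2. -/

import Mathlib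

open MeasureTheory Set

/-- `C*_{β,γ,p,η} = ∫_1^η θ⁻¹ ∫_{1/θ}^1 (1-u^p)^(γ-1) u^(-1-β) du dθ`. -/
noncomputable def Cstar (β γ p η : ℝ) : ℝ :=
  ∫ θ in (1:ℝ)..η, θ⁻¹ * ∫ u in (1/θ)..(1:ℝ), (1 - u ^ p) ^ (γ - 1) * u ^ (-1 - β)

/-- The mixing density `m♯_{β,γ,p,η}(θ)` for `1 < θ < η`. -/
noncomputable def msharp (β γ p η θ : ℝ) : ℝ :=
  (Cstar β γ p η)⁻¹ * θ⁻¹ * ∫ u in (1/θ)..(1:ℝ), (1 - u ^ p) ^ (γ - 1) * u ^ (-1 - β)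

lemma one_sub_pow_exp (x : ℝ) (m : ℕ) :
    (1 - x) ^ m = ∑ k ∈ Finset.range (m + 1), (m.choose k : ℝ) * (-1) ^ k * x ^ k := by
  rw [sub_eq_add_neg, add_comm, add_pow]
  refine Finset.sum_congr rfl fun k hk => ?_
  rw [one_pow, neg_pow]
  ring

lemma inner_eval (γ : ℕ) (hγ : 1 ≤ γ) (p β θ : ℝ) (hθ : 1 ≤ θ)
    (hβ : ∀ k : ℕ, k < γ → β ≠ p * k) :
    (∫ u in (1/θ)..(1:ℝ), (1 - u ^ p) ^ ((γ:ℝ) - 1) * u ^ (-1 - β))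
      = ∑ k ∈ Finset.range γ, ((γ - 1).choose k : ℝ) * (-1) ^ k *
          ((1 - θ ^ (β - p * k)) / (p * k - β)) := by
  have hθ0 : (0:ℝ) < θ := lt_of_lt_of_le one_pos hθ
  have hle : 1/θ ≤ 1 := by
    rw [div_le_one hθ0]; exact hθ
  have h1θ : (0:ℝ) < 1/θ := by positivity
  have hcast : ((γ:ℝ) - 1) = ((γ - 1 : ℕ) : ℝ) := by
    push_cast [Nat.cast_sub hγ]; ring
  have hEq : EqOn (fun u : ℝ => (1 - u ^ p) ^ ((γ:ℝ) - 1) * u ^ (-1 - β))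
      (fun u : ℝ => ∑ k ∈ Finset.range γ, ((γ - 1).choose k : ℝ) * (-1) ^ k *
        u ^ (p * k - 1 - β)) (uIcc (1/θ) 1) := by
    intro u hu
    rw [uIcc_of_le hle] at hu
    have hu0 : (0:ℝ) < u := lt_of_lt_of_le h1θ hu.1
    simp only
    rw [hcast, Real.rpow_natCast, one_sub_pow_exp, Nat.sub_add_cancel hγ,
      Finset.sum_mul]
    refine Finset.sum_congr rfl fun k _ => ?_
    have : (u ^ p) ^ k = u ^ (p * k) := by
      rw [← Real.rpow_natCast (u ^ p) k, ← Real.rpow_mul hu0.le]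
    rw [mul_assoc, this, ← Real.rpow_add hu0]
    ring_nf
  rw [intervalIntegral.integral_congr hEq]
  rw [intervalIntegral.integral_finset_sum]
  · refine Finset.sum_congr rfl fun k hk => ?_
    have hk' := Finset.mem_range.mp hk
    have hne : p * k - β ≠ 0 := sub_ne_zero.mpr fun h => hβ k hk' h.symm
    rw [intervalIntegral.integral_const_mul, integral_rpow]
    · have he : p * (k:ℝ) - 1 - β + 1 = p * k - β := by ring
      rw [he, Real.one_rpow, one_div, Real.inv_rpow hθ0.le, ← Real.rpow_neg hθ0.le]
      have : -(p * (k:ℝ) - β) = β - p * k := by ring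
      rw [this]
    · right
      constructor
      · intro h; exact hne (by linarith [h])
      · rw [uIcc_of_le hle]
        intro h
        exact absurd h.1 (by simp [h1θ.le]; linarith)
  · intro k _
    apply ContinuousOn.intervalIntegrable
    apply ContinuousOn.mul continuousOn_const
    apply ContinuousOn.rpow_const continuousOn_id
    intro x hx
    rw [uIcc_of_le hle] at hx
    exact Or.inl (ne_of_gt (lt_of_lt_of_le h1θ hx.1))

lemma outer_term (β e : ℝ) (y : ℝ) (hy : 1 ≤ y) (c : ℝ) (hne : e - β ≠ 0) :
    (∫ θ in (1:ℝ)..y, θ⁻¹ * (c * ((1 - θ ^ (β - e)) / (e - β))))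
      = c * ((e - β) * Real.log y - 1 + y ^ (β - e)) / (e - β) ^ 2 := by
  have hEq : EqOn (fun θ : ℝ => θ⁻¹ * (c * ((1 - θ ^ (β - e)) / (e - β))))
      (fun θ : ℝ => (c / (e - β)) * (θ⁻¹ - θ ^ (β - e - 1))) (uIcc 1 y) := by
    intro θ hθ
    rw [uIcc_of_le hy] at hθ
    have hθ0 : (0:ℝ) < θ := lt_of_lt_of_le one_pos hθ.1
    simp only
    have h1 : θ⁻¹ * θ ^ (β - e) = θ ^ (β - e - 1) := by
      rw [← Real.rpow_neg_one θ, ← Real.rpow_add hθ0]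
      ring_nf
    have h1' : θ * θ ^ (β - e - 1) = θ ^ (β - e) := by
      rw [← h1, ← mul_assoc, mul_inv_cancel₀ (ne_of_gt hθ0), one_mul]
    field_simp
    rw [h1']
  rw [intervalIntegral.integral_congr hEq, intervalIntegral.integral_const_mul,
    intervalIntegral.integral_sub, integral_inv, integral_rpow]
  · have h2 : β - e - 1 + 1 = β - e := by ring
    rw [h2, Real.one_rpow]
    have hbe : β - e ≠ 0 := fun h => hne (by linarith)
    rw [div_one]
    field_simp
    ring
  · right
    refine ⟨fun h => hne (by linarith), ?_⟩
    rw [uIcc_of_le hy]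
    intro h
    linarith [h.1]
  · rw [uIcc_of_le hy]
    intro h
    linarith [h.1]
  · apply ContinuousOn.intervalIntegrable
    apply ContinuousOn.inv₀ continuousOn_id
    intro x hx
    rw [uIcc_of_le hy] at hx
    exact ne_of_gt (lt_of_lt_of_le one_pos hx.1)
  · apply ContinuousOn.intervalIntegrable
    apply ContinuousOn.rpow_const continuousOn_id
    intro x hx
    rw [uIcc_of_le hy] at hx
    exact Or.inl (ne_of_gt (lt_of_lt_of_le one_pos hx.1))

theorem msharp_cdf (γ : ℕ) (hγ : 1 ≤ γ) (p η β : ℝ) (hp : 0 < p) (hη : 1 < η)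
    (hβ : ∀ k : ℕ, k < γ → β ≠ p * k) :
    (∀ y ∈ Ioc (1:ℝ) η,
      (∫ θ in (1:ℝ)..y, msharp β γ p η θ) =
        (Cstar β γ p η)⁻¹ *
          ∑ k ∈ Finset.range γ,
            ((γ - 1).choose k : ℝ) * (-1) ^ k *
              ((p * k - β) * Real.log y - 1 + y ^ (β - p * k)) / (p * k - β) ^ 2) ∧
    Cstar β γ p η =
      ∑ k ∈ Finset.range γ,
        ((γ - 1).choose k : ℝ) * (-1) ^ k *
          ((p * k - β) * Real.log η - 1 + η ^ (β - p * k)) / (p * k - β) ^ 2 := by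
  have key : ∀ y : ℝ, 1 ≤ y →
      (∫ θ in (1:ℝ)..y, θ⁻¹ * ∫ u in (1/θ)..(1:ℝ),
        (1 - u ^ p) ^ ((γ:ℝ) - 1) * u ^ (-1 - β)) =
      ∑ k ∈ Finset.range γ,
        ((γ - 1).choose k : ℝ) * (-1) ^ k *
          ((p * k - β) * Real.log y - 1 + y ^ (β - p * k)) / (p * k - β) ^ 2 := by
    intro y hy
    have hEq : EqOn
        (fun θ : ℝ => θ⁻¹ * ∫ u in (1/θ)..(1:ℝ),
          (1 - u ^ p) ^ ((γ:ℝ) - 1) * u ^ (-1 - β))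
        (fun θ : ℝ => ∑ k ∈ Finset.range γ, θ⁻¹ * (((γ - 1).choose k : ℝ) * (-1) ^ k *
          ((1 - θ ^ (β - p * k)) / (p * k - β)))) (uIcc 1 y) := by
      intro θ hθ
      rw [uIcc_of_le hy] at hθ
      simp only
      rw [inner_eval γ hγ p β θ hθ.1 hβ, Finset.mul_sum]
    rw [intervalIntegral.integral_congr hEq, intervalIntegral.integral_finset_sum]
    · refine Finset.sum_congr rfl fun k hk => ?_
      have hne : p * (k:ℝ) - β ≠ 0 :=
        sub_ne_zero.mpr fun h => hβ k (Finset.mem_range.mp hk) h.symm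
      exact outer_term β (p * k) y hy _ hne
    · intro k _
      apply ContinuousOn.intervalIntegrable
      apply ContinuousOn.mul
      · apply ContinuousOn.inv₀ continuousOn_id
        intro x hx
        rw [uIcc_of_le hy] at hx
        exact ne_of_gt (lt_of_lt_of_le one_pos hx.1)
      · apply ContinuousOn.mul continuousOn_const
        apply ContinuousOn.div_const
        apply ContinuousOn.sub continuousOn_const
        apply ContinuousOn.rpow_const continuousOn_id
        intro x hx
        rw [uIcc_of_le hy] at hx
        exact Or.inl (ne_of_gt (lt_of_lt_of_le one_pos hx.1))
  constructor
  · intro y hy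
    have : (∫ θ in (1:ℝ)..y, msharp β γ p η θ) =
        (Cstar β γ p η)⁻¹ * ∫ θ in (1:ℝ)..y, θ⁻¹ * ∫ u in (1/θ)..(1:ℝ),
          (1 - u ^ p) ^ ((γ:ℝ) - 1) * u ^ (-1 - β) := by
      rw [← intervalIntegral.integral_const_mul]
      refine intervalIntegral.integral_congr fun θ _ => ?_
      simp only [msharp, mul_assoc]
    rw [this, key y hy.1.le]
  · have := key η hη.le
    unfold Cstar
    exact this
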